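/- Let k ≥ 2, m ≥ 3, and 0 ≤ p ≤ k be integers, and let T(n,k,m,p) be the rooted tree of height 2 whose root r has k children b₁,…,b_k, where each of b₁,…,b_{k−p} has exactly m leaf children and each of b_{k−p+1},…,b_k has exactly m−1 leaf children (so the total number of vertices is n = 1 + k + km − p). Then the number of minimal forts of T(n,k,m,p) equals m^{k−p}·(m−1)^p + (k−p)·C(m,2) + p·C(m−1,2). -/

import Mathlib

/-- A fort of a simple graph: a nonempty set of vertices such that every vertex
outside the set has either zero or at least two neighbors in the set. -/
def IsFort {V : Type*} (G : SimpleGraph V) (F : Set V) : Prop :=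
  F.Nonempty ∧ ∀ v ∉ F, (G.neighborSet v ∩ F).ncard ≠ 1

/-- A minimal fort: a fort no proper subset of which is a fort. -/
def IsMinimalFort {V : Type*} (G : SimpleGraph V) (F : Set V) : Prop :=
  IsFort G F ∧ ∀ F' : Set V, F' ⊂ F → ¬ IsFort G F'

/-- The number of minimal forts of a graph. -/
noncomputable def numMinForts {V : Type*} (G : SimpleGraph V) : ℕ :=
  {F : Set V | IsMinimalFort G F}.ncard

/-- The number of children of the `i`-th child `bᵢ` of the root in `T(n,k,m,p)`:
the first `k - p` of the `bᵢ` have `m` (leaf) children, the remaining `p` have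
`m - 1` (leaf) children. -/
def childCount (k m p : ℕ) (i : Fin k) : ℕ := if (i : ℕ) < k - p then m else m - 1

/-- The vertex type of `T(n,k,m,p)`: `none` is the root, `some ⟨i, none⟩` is the
child `bᵢ` of the root, and `some ⟨i, some j⟩` is the `j`-th leaf child of `bᵢ`. -/
abbrev TVertex (k m p : ℕ) : Type :=
  Option ((i : Fin k) × Option (Fin (childCount k m p i)))

/-- The rooted tree `T(n,k,m,p)` of height 2: the root is adjacent to each `bᵢ`,
and each `bᵢ` is adjacent to each of its leaf children. -/
def Tkmp (k m p : ℕ) : SimpleGraph (TVertex k m p) :=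
  SimpleGraph.fromRel (fun x y =>
    (∃ i : Fin k, x = none ∧ y = some ⟨i, none⟩) ∨
    (∃ (i : Fin k) (j : Fin (childCount k m p i)),
      x = some ⟨i, none⟩ ∧ y = some ⟨i, some j⟩))

namespace St4

variable {k m p : ℕ}

def br (i : Fin k) : TVertex k m p := some ⟨i, none⟩
def lf (i : Fin k) (j : Fin (childCount k m p i)) : TVertex k m p := some ⟨i, some j⟩

lemma br_ne_lf (i i' : Fin k) (j : Fin (childCount k m p i')) :
    (br i : TVertex k m p) ≠ lf i' j := by
  simp only [br, lf, ne_eq, Option.some.injEq, Sigma.mk.inj_iff, not_and]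
  rintro rfl h
  exact (by cases (eq_of_heq h))

lemma lf_inj {i i' : Fin k} {j : Fin (childCount k m p i)} {j' : Fin (childCount k m p i')}
    (h : (lf i j : TVertex k m p) = lf i' j') : ∃ _ : i = i', HEq j j' := by
  simp only [lf, Option.some.injEq, Sigma.mk.inj_iff] at h
  obtain ⟨rfl, h2⟩ := h
  exact ⟨rfl, heq_of_eq (Option.some_injective _ (eq_of_heq h2))⟩

lemma adj_iff (x y : TVertex k m p) :
    (Tkmp k m p).Adj x y ↔ x ≠ y ∧
      (((∃ i : Fin k, x = none ∧ y = br i) ∨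
        (∃ (i : Fin k) (j : Fin (childCount k m p i)), x = br i ∧ y = lf i j)) ∨
       ((∃ i : Fin k, y = none ∧ x = br i) ∨
        (∃ (i : Fin k) (j : Fin (childCount k m p i)), y = br i ∧ x = lf i j))) :=
  SimpleGraph.fromRel_adj _ x y

lemma mem_nbhd_root (v : TVertex k m p) :
    v ∈ (Tkmp k m p).neighborSet none ↔ ∃ i, v = br i := by
  rw [SimpleGraph.mem_neighborSet, adj_iff]
  constructor
  · rintro ⟨hne, (⟨i, h1, h2⟩ | ⟨i, j, h1, h2⟩) | (⟨i, h1, h2⟩ | ⟨i, j, h1, h2⟩)⟩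
    · exact ⟨i, h2⟩
    · exact (by cases h1)
    · exact (by cases h2)
    · exact (by cases h2)
  · rintro ⟨i, rfl⟩
    exact ⟨fun h => (by cases h), Or.inl (Or.inl ⟨i, rfl, rfl⟩)⟩

lemma br_inj {i i' : Fin k} (h : (br i : TVertex k m p) = br i') : i = i' := by
  simp only [br, Option.some.injEq, Sigma.mk.inj_iff] at h
  exact h.1

lemma mem_nbhd_br (i : Fin k) (v : TVertex k m p) :
    v ∈ (Tkmp k m p).neighborSet (br i) ↔ v = none ∨ ∃ j, v = lf i j := by
  rw [SimpleGraph.mem_neighborSet, adj_iff]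
  constructor
  · rintro ⟨hne, (⟨i', h1, h2⟩ | ⟨i', j, h1, h2⟩) | (⟨i', h1, h2⟩ | ⟨i', j, h1, h2⟩)⟩
    · exact (by cases h1)
    · obtain rfl := br_inj h1
      exact Or.inr ⟨j, h2⟩
    · exact Or.inl h1
    · exact absurd h2 (br_ne_lf i i' j)
  · rintro (rfl | ⟨j, rfl⟩)
    · refine ⟨fun h => (by cases h), Or.inr (Or.inl ⟨i, rfl, rfl⟩)⟩
    · exact ⟨br_ne_lf i i j, Or.inl (Or.inr ⟨i, j, rfl, rfl⟩)⟩

lemma mem_nbhd_lf (i : Fin k) (j : Fin (childCount k m p i)) (v : TVertex k m p) :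
    v ∈ (Tkmp k m p).neighborSet (lf i j) ↔ v = br i := by
  rw [SimpleGraph.mem_neighborSet, adj_iff]
  constructor
  · rintro ⟨hne, (⟨i', h1, h2⟩ | ⟨i', j', h1, h2⟩) | (⟨i', h1, h2⟩ | ⟨i', j', h1, h2⟩)⟩
    · exact (by cases h1)
    · exact absurd h1.symm (br_ne_lf i' i j)
    · exact absurd h2.symm (br_ne_lf i' i j)
    · obtain ⟨rfl, -⟩ := lf_inj h2
      exact h1
  · rintro rfl
    exact ⟨fun h => (br_ne_lf i i j) h.symm, Or.inr (Or.inr ⟨i, j, rfl, rfl⟩)⟩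

lemma two_le_cc (hm : 3 ≤ m) (i : Fin k) : 2 ≤ childCount k m p i := by
  unfold childCount; split <;> omega

lemma lf_inj' {i : Fin k} {j j' : Fin (childCount k m p i)}
    (h : (lf i j : TVertex k m p) = lf i j') : j = j' := by
  obtain ⟨-, h2⟩ := lf_inj h
  exact eq_of_heq h2

lemma ne_lf_of_ne {i i' : Fin k} (h : i ≠ i') (j : Fin (childCount k m p i))
    (j' : Fin (childCount k m p i')) : (lf i j : TVertex k m p) ≠ lf i' j' := by
  intro he; exact h (lf_inj he).fst

lemma root_ne_lf (i : Fin k) (j : Fin (childCount k m p i)) :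
    (none : TVertex k m p) ≠ lf i j := fun h => (by cases h)

lemma root_ne_br (i : Fin k) : (none : TVertex k m p) ≠ br i := fun h => (by cases h)

lemma not_fort_singleton_lf (i : Fin k) (j : Fin (childCount k m p i)) :
    ¬ IsFort (Tkmp k m p) {lf i j} := by
  rintro ⟨-, h⟩
  refine h (br i) (fun hmem => br_ne_lf i i j hmem) ?_
  have he : (Tkmp k m p).neighborSet (br i) ∩ {lf i j} = {lf i j} := by
    ext w
    constructor
    · rintro ⟨-, hw⟩; exact hw
    · rintro rfl
      exact ⟨(mem_nbhd_br i _).mpr (Or.inr ⟨j, rfl⟩), rfl⟩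
  rw [he, Set.ncard_singleton]

lemma pair_fort (i : Fin k) {j j' : Fin (childCount k m p i)} (hjj : j ≠ j') :
    IsFort (Tkmp k m p) {lf i j, lf i j'} := by
  refine ⟨⟨lf i j, Or.inl rfl⟩, ?_⟩
  intro v hv
  rcases v with - | ⟨i', jj⟩
  · have he : (Tkmp k m p).neighborSet none ∩ {lf i j, lf i j'} = ∅ := by
      ext w
      simp only [Set.mem_inter_iff, Set.mem_empty_iff_false, iff_false, not_and]
      rw [mem_nbhd_root]
      rintro ⟨i'', rfl⟩ (h | h) <;> exact br_ne_lf i'' i _ h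
    rw [he, Set.ncard_empty]; omega
  rcases jj with - | j''
  · -- v = br i'
    show ((Tkmp k m p).neighborSet (br i') ∩ {lf i j, lf i j'}).ncard ≠ 1
    by_cases hii : i' = i
    · subst hii
      have he : (Tkmp k m p).neighborSet (br i') ∩ {lf i' j, lf i' j'} = {lf i' j, lf i' j'} := by
        ext w
        constructor
        · rintro ⟨-, hw⟩; exact hw
        · rintro (rfl | rfl)
          · exact ⟨(mem_nbhd_br i' _).mpr (Or.inr ⟨j, rfl⟩), Or.inl rfl⟩
          · exact ⟨(mem_nbhd_br i' _).mpr (Or.inr ⟨j', rfl⟩), Or.inr rfl⟩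
      rw [he, Set.ncard_pair (fun h => hjj (lf_inj' h))]; omega
    · have he : (Tkmp k m p).neighborSet (br i') ∩ {lf i j, lf i j'} = ∅ := by
        ext w
        simp only [Set.mem_inter_iff, Set.mem_empty_iff_false, iff_false, not_and]
        rw [mem_nbhd_br]
        rintro (rfl | ⟨j0, rfl⟩) (h | h)
        · exact root_ne_lf i j h
        · exact root_ne_lf i j' h
        · exact ne_lf_of_ne hii j0 j h
        · exact ne_lf_of_ne hii j0 j' h
      rw [he, Set.ncard_empty]; omega
  · -- v = lf i' j''
    show ((Tkmp k m p).neighborSet (lf i' j'') ∩ {lf i j, lf i j'}).ncard ≠ 1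
    have he : (Tkmp k m p).neighborSet (lf i' j'') ∩ {lf i j, lf i j'} = ∅ := by
      ext w
      simp only [Set.mem_inter_iff, Set.mem_empty_iff_false, iff_false, not_and]
      rw [mem_nbhd_lf]
      rintro rfl (h | h) <;> exact br_ne_lf i' i _ h
    rw [he, Set.ncard_empty]; omega

lemma pair_minimal_fort (i : Fin k) {j j' : Fin (childCount k m p i)} (hjj : j ≠ j') :
    IsMinimalFort (Tkmp k m p) {lf i j, lf i j'} := by
  refine ⟨pair_fort i hjj, ?_⟩
  rintro F' hss hF'
  obtain ⟨x, hx⟩ := hF'.1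
  have hnot : ¬ ((lf i j : TVertex k m p) ∈ F' ∧ (lf i j' : TVertex k m p) ∈ F') := by
    rintro ⟨h1, h2⟩
    refine hss.2 ?_
    rintro w (rfl | h)
    · exact h1
    · exact (show w = lf i j' from h) ▸ h2
  have hcase : F' = {(lf i j : TVertex k m p)} ∨ F' = {(lf i j' : TVertex k m p)} := by
    rcases hss.1 hx with rfl | hx2
    · left
      refine Set.eq_singleton_iff_unique_mem.mpr ⟨hx, ?_⟩
      intro y hy
      rcases hss.1 hy with rfl | h
      · rfl
      · exact absurd ⟨hx, (show y = lf i j' from h) ▸ hy⟩ hnot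
    · right
      have hx2' : x = lf i j' := hx2
      subst hx2'
      refine Set.eq_singleton_iff_unique_mem.mpr ⟨hx, ?_⟩
      intro y hy
      rcases hss.1 hy with rfl | h
      · exact absurd ⟨hy, hx⟩ hnot
      · exact h
  rcases hcase with rfl | rfl
  · exact not_fort_singleton_lf i j hF'
  · exact not_fort_singleton_lf i j' hF'

def typeA (f : ∀ i : Fin k, Fin (childCount k m p i)) : Set (TVertex k m p) :=
  insert none (Set.range fun i => lf i (f i))

lemma mem_typeA {f : ∀ i : Fin k, Fin (childCount k m p i)} {v : TVertex k m p} :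
    v ∈ typeA f ↔ v = none ∨ ∃ i, v = lf i (f i) := by
  simp only [typeA, Set.mem_insert_iff, Set.mem_range]
  constructor
  · rintro (rfl | ⟨i, rfl⟩)
    · exact Or.inl rfl
    · exact Or.inr ⟨i, rfl⟩
  · rintro (rfl | ⟨i, rfl⟩)
    · exact Or.inl rfl
    · exact Or.inr ⟨i, rfl⟩

lemma br_notin_typeA (f : ∀ i : Fin k, Fin (childCount k m p i)) (i : Fin k) :
    (br i : TVertex k m p) ∉ typeA f := by
  rw [mem_typeA]
  rintro (h | ⟨i', h⟩)
  · exact (by cases h)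
  · exact br_ne_lf i i' _ h

lemma typeA_fort (f : ∀ i : Fin k, Fin (childCount k m p i)) :
    IsFort (Tkmp k m p) (typeA f) := by
  refine ⟨⟨none, Set.mem_insert _ _⟩, ?_⟩
  intro v hv
  rcases v with - | ⟨i', jj⟩
  · exact absurd (Set.mem_insert _ _) hv
  rcases jj with - | j''
  · show ((Tkmp k m p).neighborSet (br i') ∩ typeA f).ncard ≠ 1
    have he : (Tkmp k m p).neighborSet (br i') ∩ typeA f = {none, lf i' (f i')} := by
      ext w
      constructor
      · rintro ⟨hn, ht⟩
        rcases (mem_nbhd_br i' w).mp hn with rfl | ⟨j0, rfl⟩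
        · exact Or.inl rfl
        · rcases mem_typeA.mp ht with h | ⟨i'', h⟩
          · exact (by cases h)
          · obtain ⟨rfl, h2⟩ := lf_inj h
            exact Or.inr (congrArg _ (eq_of_heq h2))
      · rintro (rfl | rfl)
        · exact ⟨(mem_nbhd_br i' _).mpr (Or.inl rfl), Set.mem_insert _ _⟩
        · exact ⟨(mem_nbhd_br i' _).mpr (Or.inr ⟨f i', rfl⟩), mem_typeA.mpr (Or.inr ⟨i', rfl⟩)⟩
    rw [he, Set.ncard_pair (root_ne_lf i' (f i'))]
    omega
  · show ((Tkmp k m p).neighborSet (lf i' j'') ∩ typeA f).ncard ≠ 1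
    have he : (Tkmp k m p).neighborSet (lf i' j'') ∩ typeA f = ∅ := by
      ext w
      simp only [Set.mem_empty_iff_false, iff_false]
      rintro ⟨hn, ht⟩
      obtain rfl := (mem_nbhd_lf i' j'' w).mp hn
      exact br_notin_typeA f i' ht
    rw [he, Set.ncard_empty]
    omega

lemma typeA_minimal_fort (f : ∀ i : Fin k, Fin (childCount k m p i)) :
    IsMinimalFort (Tkmp k m p) (typeA f) := by
  refine ⟨typeA_fort f, ?_⟩
  rintro F' hss hF'
  have hsub := hss.1
  have hbr : ∀ i, (br i : TVertex k m p) ∉ F' := fun i h => br_notin_typeA f i (hsub h)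
  by_cases hroot : (none : TVertex k m p) ∈ F'
  · obtain ⟨x, hxA, hxF⟩ := Set.exists_of_ssubset hss
    rcases mem_typeA.mp hxA with rfl | ⟨i, rfl⟩
    · exact hxF hroot
    · refine hF'.2 (br i) (hbr i) ?_
      have he : (Tkmp k m p).neighborSet (br i) ∩ F' = {none} := by
        ext w
        constructor
        · rintro ⟨hn, hw⟩
          rcases (mem_nbhd_br i w).mp hn with rfl | ⟨j0, rfl⟩
          · rfl
          · exfalso
            rcases mem_typeA.mp (hsub hw) with h | ⟨i'', h⟩
            · exact (by cases h)
            · obtain ⟨rfl, h2⟩ := lf_inj h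
              obtain rfl := eq_of_heq h2
              exact hxF hw
        · rintro rfl
          exact ⟨(mem_nbhd_br i _).mpr (Or.inl rfl), hroot⟩
      rw [he, Set.ncard_singleton]
  · obtain ⟨x, hx⟩ := hF'.1
    rcases mem_typeA.mp (hsub hx) with rfl | ⟨i, rfl⟩
    · exact hroot hx
    · refine hF'.2 (br i) (hbr i) ?_
      have he : (Tkmp k m p).neighborSet (br i) ∩ F' = {lf i (f i)} := by
        ext w
        constructor
        · rintro ⟨hn, hw⟩
          rcases (mem_nbhd_br i w).mp hn with rfl | ⟨j0, rfl⟩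
          · exact absurd hw hroot
          · rcases mem_typeA.mp (hsub hw) with h | ⟨i'', h⟩
            · exact (by cases h)
            · obtain ⟨rfl, h2⟩ := lf_inj h
              exact congrArg _ (eq_of_heq h2)
        · rintro rfl
          exact ⟨(mem_nbhd_br i _).mpr (Or.inr ⟨f i, rfl⟩), hx⟩
      rw [he, Set.ncard_singleton]

lemma classification (hm : 3 ≤ m) (F : Set (TVertex k m p)) :
    IsMinimalFort (Tkmp k m p) F ↔
      (∃ f, F = typeA f) ∨
      ∃ (i : Fin k) (j j' : Fin (childCount k m p i)), j ≠ j' ∧ F = {lf i j, lf i j'} := by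
  constructor
  · rintro ⟨hF, hmin⟩
    by_cases hpair : ∃ (i : Fin k) (j j' : Fin (childCount k m p i)),
        j ≠ j' ∧ lf i j ∈ F ∧ lf i j' ∈ F
    · obtain ⟨i, j, j', hjj, h1, h2⟩ := hpair
      right
      refine ⟨i, j, j', hjj, ?_⟩
      have hsub : {(lf i j : TVertex k m p), lf i j'} ⊆ F := by
        rintro w (rfl | h)
        · exact h1
        · exact (show w = lf i j' from h) ▸ h2
      by_contra hne
      exact hmin _ (hsub.ssubset_of_ne (fun h => hne h.symm)) (pair_fort i hjj)
    · have hle : ∀ (i : Fin k) (j j' : Fin (childCount k m p i)),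
          lf i j ∈ F → lf i j' ∈ F → j = j' := by
        intro i j j' h1 h2
        by_contra hne
        exact hpair ⟨i, j, j', hne, h1, h2⟩
      have hbr : ∀ i, (br i : TVertex k m p) ∉ F := by
        intro i hbri
        have h2c := two_le_cc (p := p) hm i
        have hj01 : (⟨0, by omega⟩ : Fin (childCount k m p i)) ≠ ⟨1, by omega⟩ := by
          intro h
          exact absurd (Fin.mk.injEq _ _ _ _ ▸ h) (by simp)
        have hjout : ∃ j, (lf i j : TVertex k m p) ∉ F := by
          by_contra hno
          push_neg at hno
          exact hj01 (hle i _ _ (hno _) (hno _))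
        obtain ⟨j, hj⟩ := hjout
        refine hF.2 (lf i j) hj ?_
        have he : (Tkmp k m p).neighborSet (lf i j) ∩ F = {br i} := by
          ext w
          constructor
          · rintro ⟨hn, -⟩
            exact (mem_nbhd_lf i j w).mp hn
          · rintro rfl
            exact ⟨(mem_nbhd_lf i j _).mpr rfl, hbri⟩
        rw [he, Set.ncard_singleton]
      have hroot : (none : TVertex k m p) ∈ F := by
        by_contra hroot
        obtain ⟨x, hx⟩ := hF.1
        rcases x with - | ⟨i, jj⟩
        · exact hroot hx
        rcases jj with - | j
        · exact hbr i hx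
        · refine hF.2 (br i) (hbr i) ?_
          have he : (Tkmp k m p).neighborSet (br i) ∩ F = {lf i j} := by
            ext w
            constructor
            · rintro ⟨hn, hw⟩
              rcases (mem_nbhd_br i w).mp hn with rfl | ⟨j0, rfl⟩
              · exact absurd hw hroot
              · exact congrArg _ (hle i j0 j hw hx)
            · rintro rfl
              exact ⟨(mem_nbhd_br i _).mpr (Or.inr ⟨j, rfl⟩), hx⟩
          rw [he, Set.ncard_singleton]
      have hex : ∀ i, ∃ j, (lf i j : TVertex k m p) ∈ F := by
        intro i
        by_contra hno
        push_neg at hno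
        refine hF.2 (br i) (hbr i) ?_
        have he : (Tkmp k m p).neighborSet (br i) ∩ F = {none} := by
          ext w
          constructor
          · rintro ⟨hn, hw⟩
            rcases (mem_nbhd_br i w).mp hn with rfl | ⟨j0, rfl⟩
            · rfl
            · exact absurd hw (hno j0)
          · rintro rfl
            exact ⟨(mem_nbhd_br i _).mpr (Or.inl rfl), hroot⟩
        rw [he, Set.ncard_singleton]
      choose f hf using hex
      left
      refine ⟨f, subset_antisymm ?_ ?_⟩
      · intro v hv
        rcases v with - | ⟨i, jj⟩
        · exact Set.mem_insert _ _
        rcases jj with - | j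
        · exact absurd hv (hbr i)
        · obtain rfl := hle i j (f i) hv (hf i)
          exact mem_typeA.mpr (Or.inr ⟨i, rfl⟩)
      · intro v hv
        rcases mem_typeA.mp hv with rfl | ⟨i, rfl⟩
        · exact hroot
        · exact hf i
  · rintro (⟨f, rfl⟩ | ⟨i, j, j', hjj, rfl⟩)
    · exact typeA_minimal_fort f
    · exact pair_minimal_fort i hjj

lemma typeA_injective : Function.Injective (typeA (k := k) (m := m) (p := p)) := by
  intro f g h
  funext i
  have h1 : (lf i (f i) : TVertex k m p) ∈ typeA g := h ▸ mem_typeA.mpr (Or.inr ⟨i, rfl⟩)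
  rcases mem_typeA.mp h1 with h2 | ⟨i', h2⟩
  · exact absurd h2 (fun he => (by cases he))
  · obtain ⟨rfl, h3⟩ := lf_inj h2
    exact eq_of_heq h3

def pairSet (i : Fin k) (s : Sym2 (Fin (childCount k m p i))) : Set (TVertex k m p) :=
  {v | ∃ j ∈ s, v = lf i j}

lemma lf_mem_pairSet {i : Fin k} {s : Sym2 (Fin (childCount k m p i))}
    {j : Fin (childCount k m p i)} : (lf i j : TVertex k m p) ∈ pairSet i s ↔ j ∈ s := by
  constructor
  · rintro ⟨j0, hj0, he⟩
    obtain rfl := lf_inj' he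
    exact hj0
  · intro hj
    exact ⟨j, hj, rfl⟩

lemma pairSet_mk (i : Fin k) (j j' : Fin (childCount k m p i)) :
    pairSet i s(j, j') = {(lf i j : TVertex k m p), lf i j'} := by
  ext w
  constructor
  · rintro ⟨j0, hj0, rfl⟩
    rcases Sym2.mem_iff.mp hj0 with rfl | rfl
    · exact Or.inl rfl
    · exact Or.inr rfl
  · rintro (rfl | h)
    · exact ⟨j, Sym2.mem_iff.mpr (Or.inl rfl), rfl⟩
    · exact ⟨j', Sym2.mem_iff.mpr (Or.inr rfl), show w = lf i j' from h⟩

abbrev PairIdx (k m p : ℕ) : Type :=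
  Σ i : Fin k, {s : Sym2 (Fin (childCount k m p i)) // ¬ s.IsDiag}

def eB : PairIdx k m p → Set (TVertex k m p) := fun x => pairSet x.1 x.2.1

lemma range_eB : Set.range (eB (k := k) (m := m) (p := p)) =
    {F | ∃ (i : Fin k) (j j' : Fin (childCount k m p i)),
      j ≠ j' ∧ F = {lf i j, lf i j'}} := by
  ext F
  constructor
  · rintro ⟨⟨i, s, hs⟩, rfl⟩
    obtain ⟨⟨j, j'⟩, rfl⟩ := Quot.exists_rep s
    refine ⟨i, j, j', fun h => hs (Sym2.mk_isDiag_iff.mpr h), ?_⟩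
    exact (pairSet_mk i j j').symm ▸ rfl
  · rintro ⟨i, j, j', hjj, rfl⟩
    exact ⟨⟨i, s(j, j'), fun h => hjj (Sym2.mk_isDiag_iff.mp h)⟩, pairSet_mk i j j'⟩

lemma eB_injective : Function.Injective (eB (k := k) (m := m) (p := p)) := by
  rintro ⟨i, s, hs⟩ ⟨i', t, ht⟩ h
  obtain ⟨⟨a, b⟩, rfl⟩ := Quot.exists_rep s
  obtain ⟨⟨c, d⟩, rfl⟩ := Quot.exists_rep t
  have hmem : (lf i a : TVertex k m p) ∈ pairSet i' (s(c, d) : Sym2 _) := by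
    rw [show pairSet i' s(c, d) = eB ⟨i', s(c, d), ht⟩ from rfl, ← h]
    exact lf_mem_pairSet.mpr (Sym2.mem_iff.mpr (Or.inl rfl))
  obtain ⟨j0, -, he⟩ := hmem
  obtain ⟨rfl, -⟩ := lf_inj he
  have hst : (s(a, b) : Sym2 (Fin (childCount k m p i))) = s(c, d) := by
    apply Sym2.ext
    intro x
    rw [← lf_mem_pairSet (i := i) (j := x), ← lf_mem_pairSet (i := i) (j := x)]
    rw [show pairSet i s(a,b) = eB ⟨i, s(a,b), hs⟩ from rfl,
        show pairSet i s(c,d) = eB ⟨i, s(c,d), ht⟩ from rfl, h]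
  exact congrArg (Sigma.mk i) (Subtype.ext hst)

lemma typeA_ne_pair (f : ∀ i : Fin k, Fin (childCount k m p i)) (x : PairIdx k m p) :
    typeA f ≠ eB x := by
  intro h
  have h1 : (none : TVertex k m p) ∈ eB x := h ▸ Set.mem_insert _ _
  obtain ⟨j0, -, he⟩ := h1
  exact (by cases he)

lemma sum_ite_lt (hp : p ≤ k) (a b : ℕ) :
    ∑ i : Fin k, (if (i : ℕ) < k - p then a else b) = (k - p) * a + p * b := by
  rw [Fin.sum_univ_eq_sum_range (fun n => if n < k - p then a else b) k]
  obtain ⟨d, hd⟩ : ∃ d, k - p = d := ⟨_, rfl⟩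
  rw [hd, show k = d + p by omega, Finset.sum_range_add]
  have h1 : ∑ i ∈ Finset.range d, (if i < d then a else b) = d * a := by
    rw [Finset.sum_congr rfl (fun i hi => if_pos (Finset.mem_range.mp hi)),
      Finset.sum_const, Finset.card_range, smul_eq_mul]
  have h2 : ∑ i ∈ Finset.range p, (if d + i < d then a else b) = p * b := by
    rw [Finset.sum_congr rfl (fun i _ => if_neg (by omega)),
      Finset.sum_const, Finset.card_range, smul_eq_mul]
  rw [h1, h2]

lemma prod_ite_lt (hp : p ≤ k) (a b : ℕ) :
    ∏ i : Fin k, (if (i : ℕ) < k - p then a else b) = a ^ (k - p) * b ^ p := by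
  rw [Fin.prod_univ_eq_prod_range (fun n => if n < k - p then a else b) k]
  obtain ⟨d, hd⟩ : ∃ d, k - p = d := ⟨_, rfl⟩
  rw [hd, show k = d + p by omega, Finset.prod_range_add]
  have h1 : ∏ i ∈ Finset.range d, (if i < d then a else b) = a ^ d := by
    rw [Finset.prod_congr rfl (fun i hi => if_pos (Finset.mem_range.mp hi)),
      Finset.prod_const, Finset.card_range]
  have h2 : ∏ i ∈ Finset.range p, (if d + i < d then a else b) = b ^ p := by
    rw [Finset.prod_congr rfl (fun i _ => if_neg (by omega)),
      Finset.prod_const, Finset.card_range]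
  rw [h1, h2]

end St4

theorem stmt_4 (k m p : ℕ) (hk : 2 ≤ k) (hm : 3 ≤ m) (hp : p ≤ k) :
    Fintype.card (TVertex k m p) = 1 + k + k * m - p ∧
    numMinForts (Tkmp k m p) =
      m ^ (k - p) * (m - 1) ^ p + (k - p) * m.choose 2 + p * (m - 1).choose 2 := by
  have e3 : p * m ≤ k * m := Nat.mul_le_mul_right m hp
  have e4 : p ≤ p * m := Nat.le_mul_of_pos_right p (by omega)
  have e1 : (k - p) * m = k * m - p * m := Nat.sub_mul k p m
  have e2 : p * (m - 1) + p = p * m := by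
    have h : m - 1 + 1 = m := by omega
    calc p * (m - 1) + p = p * ((m - 1) + 1) := by ring
    _ = p * m := by rw [h]
  constructor
  · have hcard : Fintype.card (TVertex k m p)
        = (∑ i : Fin k, (childCount k m p i + 1)) + 1 := by
      simp [Fintype.card_option, Fintype.card_sigma, Fintype.card_fin]
    rw [hcard, Finset.sum_add_distrib, Finset.sum_const, Finset.card_univ, Fintype.card_fin,
      smul_eq_mul, mul_one]
    have h1 : ∑ i : Fin k, childCount k m p i = (k - p) * m + p * (m - 1) := by
      unfold childCount
      exact St4.sum_ite_lt hp m (m - 1)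
    rw [h1, e1]
    omega
  · have hset : {F : Set (TVertex k m p) | IsMinimalFort (Tkmp k m p) F}
        = Set.range St4.typeA ∪ Set.range St4.eB := by
      ext F
      constructor
      · intro hF
        rcases (St4.classification hm F).mp hF with ⟨f, rfl⟩ | h
        · exact Or.inl ⟨f, rfl⟩
        · exact Or.inr (by rw [St4.range_eB]; exact h)
      · intro hF
        apply (St4.classification hm F).mpr
        rcases hF with ⟨f, rfl⟩ | h
        · exact Or.inl ⟨f, rfl⟩
        · exact Or.inr (by rwa [St4.range_eB] at h)
    have hdisj : Disjoint (Set.range (St4.typeA (k := k) (m := m) (p := p)))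
        (Set.range St4.eB) := by
      rw [Set.disjoint_left]
      rintro F ⟨f, rfl⟩ ⟨x, hx⟩
      exact St4.typeA_ne_pair f x hx.symm
    have hA : (Set.range (St4.typeA (k := k) (m := m) (p := p))).ncard
        = m ^ (k - p) * (m - 1) ^ p := by
      rw [← Set.image_univ, Set.ncard_image_of_injective _ St4.typeA_injective,
        Set.ncard_univ, Nat.card_eq_fintype_card, Fintype.card_pi]
      simp only [Fintype.card_fin]
      unfold childCount
      exact St4.prod_ite_lt hp m (m - 1)
    have hB : (Set.range (St4.eB (k := k) (m := m) (p := p))).ncard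
        = (k - p) * m.choose 2 + p * (m - 1).choose 2 := by
      rw [← Set.image_univ, Set.ncard_image_of_injective _ St4.eB_injective,
        Set.ncard_univ, Nat.card_eq_fintype_card, Fintype.card_sigma]
      have h2 : ∀ i : Fin k,
          Fintype.card {s : Sym2 (Fin (childCount k m p i)) // ¬ s.IsDiag}
            = if (i : ℕ) < k - p then m.choose 2 else (m - 1).choose 2 := by
        intro i
        rw [Sym2.card_subtype_not_diag, Fintype.card_fin]
        unfold childCount
        split <;> rfl
      rw [Finset.sum_congr rfl (fun i _ => h2 i)]
      exact St4.sum_ite_lt hp _ _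
    rw [numMinForts, hset, Set.ncard_union_eq hdisj (Set.finite_range _) (Set.finite_range _),
      hA, hB, add_assoc]
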